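/- For every n ≥ 1 and every d_min ≥ 1, there exist a residue a modulo n + 1 and a code C* of binary words of length n such that every x ∈ C* satisfies σ(x) ≡ a (mod n+1), the minimum Hamming distance of C* is at least d_min, and |C*| · V₂(n, d_min + 1) ≥ 2^{n−1}, where V₂(n, r) = Σ_{i=0}^{r} C(n, i). In particular, any two distinct words of C*, viewed as lists of bits, have no common subsequence of length n − 1, so C* additionally corrects a single deletion. -/

import Mathlib

/-- The moment of a binary word `x = x_1 … x_n`: `σ(x) = ∑ i, i * x_i` (1-based indexing). -/
def mom {n : ℕ} (x : Fin n → Bool) : ℕ :=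
  ∑ i : Fin n, ((i : ℕ) + 1) * (if x i then 1 else 0)

def Bv (b : Bool) : ℕ := if b then 1 else 0

def Sv (l : List Bool) : ℕ := (l.map Bv).sum

def Fv : List Bool → ℕ
  | [] => 0
  | b :: t => Bv b + Fv t + Sv t

lemma Sv_nil : Sv [] = 0 := rfl
lemma Sv_cons (b : Bool) (t : List Bool) : Sv (b :: t) = Bv b + Sv t := rfl

lemma Bv_le_one (b : Bool) : Bv b ≤ 1 := by cases b <;> simp [Bv]

lemma Sv_le_length (l : List Bool) : Sv l ≤ l.length := by
  induction l with
  | nil => simp [Sv]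
  | cons b t ih => simp only [Sv_cons, List.length_cons]
                   have := Bv_le_one b; omega

lemma Sv_ofFn {n : ℕ} (x : Fin n → Bool) : Sv (List.ofFn x) = ∑ i : Fin n, Bv (x i) := by
  simp [Sv, List.map_ofFn, List.sum_ofFn, Function.comp]

lemma Fv_ofFn {n : ℕ} (x : Fin n → Bool) : Fv (List.ofFn x) = mom x := by
  induction n with
  | zero => simp [Fv, mom]
  | succ m ih =>
    rw [List.ofFn_succ]
    show Bv (x 0) + Fv (List.ofFn fun i => x i.succ) + Sv (List.ofFn fun i => x i.succ)
        = mom x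
    rw [ih, Sv_ofFn, mom, mom, Fin.sum_univ_succ]
    rw [add_assoc, ← Finset.sum_add_distrib]
    congr 1
    · simp [Bv]
    · apply Finset.sum_congr rfl
      intro i _
      simp only [Bv, Fin.val_succ]
      ring

lemma Sv_append (l₁ l₂ : List Bool) : Sv (l₁ ++ l₂) = Sv l₁ + Sv l₂ := by
  simp [Sv]

lemma Sv_eq_zero_mem {l : List Bool} (h : Sv l = 0) {c : Bool} (hc : c ∈ l) : c = false := by
  induction l with
  | nil => simp at hc
  | cons b t ih =>
    simp only [Sv_cons] at h
    rcases List.mem_cons.1 hc with rfl | hc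
    · cases c
      · rfl
      · simp [Bv] at h
    · exact ih (by omega) hc

lemma Sv_eq_length_mem {l : List Bool} (h : Sv l = l.length) {c : Bool} (hc : c ∈ l) :
    c = true := by
  induction l with
  | nil => simp at hc
  | cons b t ih =>
    simp only [Sv_cons, List.length_cons] at h
    have h1 := Bv_le_one b
    have h2 := Sv_le_length t
    rcases List.mem_cons.1 hc with rfl | hc
    · cases c
      · simp [Bv] at h; omega
      · rfl
    · exact ih (by omega) hc

lemma Sv_insertIdx (b : Bool) : ∀ (p : ℕ) (l : List Bool), p ≤ l.length →
    Sv (l.insertIdx p b) = Bv b + Sv l := by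
  intro p
  induction p with
  | zero => intro l _; rfl
  | succ p ih =>
    intro l hl
    cases l with
    | nil => simp at hl
    | cons c t =>
      show Sv (c :: t.insertIdx p b) = _
      rw [Sv_cons, ih t (by simpa using hl), Sv_cons]
      omega

lemma Fv_insertIdx (b : Bool) : ∀ (p : ℕ) (l : List Bool), p ≤ l.length →
    Fv (l.insertIdx p b) = Fv l + (p + 1) * Bv b + Sv (l.drop p) := by
  intro p
  induction p with
  | zero =>
    intro l _
    show Bv b + Fv l + Sv l = _
    simp only [List.drop_zero]
    ring
  | succ p ih =>
    intro l hl
    cases l with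
    | nil => simp at hl
    | cons c t =>
      have ht : p ≤ t.length := by simpa using hl
      show Fv (c :: t.insertIdx p b) = _
      show Bv c + Fv (t.insertIdx p b) + Sv (t.insertIdx p b) = _
      rw [ih t ht, Sv_insertIdx b p t ht]
      show _ = Fv (c :: t) + _ + Sv (t.drop p)
      show _ = Bv c + Fv t + Sv t + _ + Sv (t.drop p)
      ring

lemma exists_insertIdx_of_sublist : ∀ {w l : List Bool}, w.Sublist l →
    l.length = w.length + 1 → ∃ p b, p ≤ w.length ∧ l = w.insertIdx p b := by
  intro w l h
  induction h with
  | slnil => intro h; simp at h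
  | @cons w' l' a h ih =>
    intro hl
    have : w' = l' := h.eq_of_length (by simp at hl; omega)
    subst this
    exact ⟨0, a, Nat.zero_le _, rfl⟩
  | @cons_cons w' l' a h ih =>
    intro hl
    obtain ⟨p, b, hp, rfl⟩ := ih (by simp at hl; omega)
    exact ⟨p + 1, b, by simpa using Nat.succ_le_succ hp, rfl⟩

lemma insertIdx_eq_insertIdx (b : Bool) : ∀ (q p : ℕ) (l : List Bool), p ≤ q → q ≤ l.length →
    (∀ c ∈ (l.drop p).take (q - p), c = b) → l.insertIdx p b = l.insertIdx q b := by
  intro q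
  induction q with
  | zero => intro p l hp _ _; interval_cases p; rfl
  | succ q ih =>
    intro p l hp hl hseg
    cases l with
    | nil => simp at hl
    | cons c t =>
      cases p with
      | zero =>
        have hc : c = b := hseg c (by simp)
        rw [hc]
        show b :: b :: t = b :: t.insertIdx q b
        congr 1
        have := ih 0 t (by omega) (by simpa using hl)
          (fun c hcm => hseg c (by simp only [List.drop_zero, List.take_succ_cons,
            Nat.sub_zero] at hcm ⊢; exact List.mem_cons_of_mem _ hcm))
        simpa using this
      | succ p =>
        show c :: t.insertIdx p b = c :: t.insertIdx q b
        congr 1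
        exact ih p t (by omega) (by simpa using hl) (by simpa using hseg)

lemma vt_core (w : List Bool) (p q : ℕ) (bx bY : Bool) (hpq : p ≤ q) (hq : q ≤ w.length)
    (heq : (p + 1) * Bv bx + Sv (w.drop p) = (q + 1) * Bv bY + Sv (w.drop q)) :
    w.insertIdx p bx = w.insertIdx q bY := by
  have hsplit : w.drop p = (w.drop p).take (q - p) ++ w.drop q := by
    conv_lhs => rw [← List.take_append_drop (q - p) (w.drop p)]
    rw [List.drop_drop]
    congr 2
    omega
  have hm : Sv (w.drop p) = Sv ((w.drop p).take (q - p)) + Sv (w.drop q) := by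
    conv_lhs => rw [hsplit]
    exact Sv_append _ _
  have hseglen : ((w.drop p).take (q - p)).length = q - p := by
    simp only [List.length_take, List.length_drop]
    omega
  have hmle : Sv ((w.drop p).take (q - p)) ≤ q - p := by
    have := Sv_le_length ((w.drop p).take (q - p))
    omega
  have key : (p + 1) * Bv bx + Sv ((w.drop p).take (q - p)) = (q + 1) * Bv bY := by
    omega
  have eBf : Bv false = 0 := rfl
  have eBt : Bv true = 1 := rfl
  cases bx <;> cases bY
  · -- false false
    rw [eBf, mul_zero, mul_zero] at key
    exact insertIdx_eq_insertIdx false q p w hpq hq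
      (fun c hc => Sv_eq_zero_mem (by omega) hc)
  · -- false true
    rw [eBf, eBt, mul_zero, mul_one] at key
    omega
  · -- true false
    rw [eBf, eBt, mul_zero, mul_one] at key
    omega
  · -- true true
    rw [eBt, mul_one, mul_one] at key
    exact insertIdx_eq_insertIdx true q p w hpq hq
      (fun c hc => Sv_eq_length_mem (by omega) hc)

lemma Dx_le (w : List Bool) (p : ℕ) (b : Bool) (hp : p ≤ w.length) :
    (p + 1) * Bv b + Sv (w.drop p) ≤ w.length + 1 := by
  have h1 := Sv_le_length (w.drop p)
  rw [List.length_drop] at h1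
  cases b
  · rw [show Bv false = 0 from rfl, mul_zero]
    omega
  · rw [show Bv true = 1 from rfl, mul_one]
    omega

lemma vt_unique {w x y : List Bool} (hwx : w.Sublist x) (hwy : w.Sublist y)
    (hx : x.length = w.length + 1) (hy : y.length = w.length + 1)
    (hmod : Fv x % (w.length + 2) = Fv y % (w.length + 2)) : x = y := by
  obtain ⟨p, bx, hp, rfl⟩ := exists_insertIdx_of_sublist hwx hx
  obtain ⟨q, bY, hq, hyeq⟩ := exists_insertIdx_of_sublist hwy hy
  subst hyeq
  rw [Fv_insertIdx bx p w hp, Fv_insertIdx bY q w hq] at hmod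
  have hmod2 : (Fv w + ((p + 1) * Bv bx + Sv (w.drop p))) % (w.length + 2)
      = (Fv w + ((q + 1) * Bv bY + Sv (w.drop q))) % (w.length + 2) := by
    rw [← add_assoc, ← add_assoc]
    exact hmod
  have hmod' := Nat.ModEq.add_left_cancel' (Fv w) hmod2
  have hDx := Dx_le w p bx hp
  have hDy := Dx_le w q bY hq
  have heq : (p + 1) * Bv bx + Sv (w.drop p) = (q + 1) * Bv bY + Sv (w.drop q) := by
    have h2 := hmod'
    unfold Nat.ModEq at h2
    rw [Nat.mod_eq_of_lt (by omega), Nat.mod_eq_of_lt (by omega)] at h2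
    exact h2
  rcases le_total p q with h | h
  · exact vt_core w p q bx bY h hq heq
  · exact (vt_core w q p bY bx h hp heq.symm).symm

lemma vt_fin {n : ℕ} (hn : 1 ≤ n) {x y : Fin n → Bool}
    (hmod : mom x % (n + 1) = mom y % (n + 1)) (w : List Bool) (hw : w.length = n - 1)
    (h1 : w.Sublist (List.ofFn x)) (h2 : w.Sublist (List.ofFn y)) : x = y := by
  have hlx : (List.ofFn x).length = w.length + 1 := by
    rw [List.length_ofFn, hw]; omega
  have hly : (List.ofFn y).length = w.length + 1 := by
    rw [List.length_ofFn, hw]; omega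
  have hM : w.length + 2 = n + 1 := by omega
  have := vt_unique h1 h2 hlx hly (by rw [hM, Fv_ofFn, Fv_ofFn]; exact hmod)
  exact List.ofFn_inj.1 this



lemma mom_update {n : ℕ} (y : Fin n → Bool) (j : Fin n) (b : Bool) :
    mom (Function.update y j b) + ((j : ℕ) + 1) * (if y j then 1 else 0)
      = mom y + ((j : ℕ) + 1) * (if b then 1 else 0) := by
  classical
  have h1 : mom (Function.update y j b)
      = ((j : ℕ) + 1) * (if b then 1 else 0)
        + ∑ i ∈ Finset.univ.erase j, ((i : ℕ) + 1) * (if y i then 1 else 0) := by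
    rw [mom, ← Finset.add_sum_erase _ _ (Finset.mem_univ j)]
    simp only [Function.update_self]
    congr 1
    apply Finset.sum_congr rfl
    intro i hi
    rw [Function.update_of_ne (Finset.ne_of_mem_erase hi)]
  have h2 : mom y
      = ((j : ℕ) + 1) * (if y j then 1 else 0)
        + ∑ i ∈ Finset.univ.erase j, ((i : ℕ) + 1) * (if y i then 1 else 0) := by
    rw [mom, ← Finset.add_sum_erase _ _ (Finset.mem_univ j)]
  omega

lemma ham_update_le {n : ℕ} (y : Fin n → Bool) (j : Fin n) (b : Bool) :
    hammingDist (Function.update y j b) y ≤ 1 := by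
  classical
  have : (Finset.univ.filter fun i => Function.update y j b i ≠ y i) ⊆ {j} := by
    intro i hi
    simp only [Finset.mem_filter] at hi
    by_contra hij
    simp only [Finset.mem_singleton] at hij
    exact hi.2 (Function.update_of_ne hij _ _)
  calc hammingDist (Function.update y j b) y
      = (Finset.univ.filter fun i => Function.update y j b i ≠ y i).card := rfl
    _ ≤ ({j} : Finset (Fin n)).card := Finset.card_le_card this
    _ = 1 := Finset.card_singleton j

lemma ball_card_le (n r : ℕ) (c : Fin n → Bool) :
    (Finset.univ.filter fun z => hammingDist z c ≤ r).card
      ≤ ∑ i ∈ Finset.range (r + 1), n.choose i := by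
  classical
  set T : Finset (Finset (Fin n)) :=
    (Finset.range (r + 1)).biUnion (fun i => Finset.powersetCard i Finset.univ) with hT
  have hmap : ∀ z ∈ (Finset.univ.filter fun z : Fin n → Bool => hammingDist z c ≤ r),
      (Finset.univ.filter fun i => z i ≠ c i) ∈ T := by
    intro z hz
    simp only [Finset.mem_filter, Finset.mem_univ, true_and] at hz
    rw [hT]
    apply Finset.mem_biUnion.2
    refine ⟨(Finset.univ.filter fun i => z i ≠ c i).card, ?_, ?_⟩
    · exact Finset.mem_range.2 (Nat.lt_succ_of_le hz)
    · exact Finset.mem_powersetCard.2 ⟨Finset.subset_univ _, rfl⟩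
  have hinj : Set.InjOn (fun z : Fin n → Bool => Finset.univ.filter fun i => z i ≠ c i)
      ↑(Finset.univ.filter fun z : Fin n → Bool => hammingDist z c ≤ r) := by
    intro z1 _ z2 _ h
    funext i
    have := Finset.ext_iff.1 h i
    simp only [Finset.mem_filter, Finset.mem_univ, true_and] at this
    by_cases h1 : z1 i = c i
    · have h2 : z2 i = c i := by
        by_contra h2
        exact (by rw [h1] at this; exact absurd (this.2 h2) (by simp)) 
      rw [h1, h2]
    · have h2 : z2 i ≠ c i := this.1 h1
      cases hz1 : z1 i <;> cases hz2 : z2 i <;> cases hc : c i <;>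
        simp_all
  have hcard := Finset.card_le_card_of_injOn _ hmap hinj
  refine hcard.trans ?_
  rw [hT]
  rw [Finset.card_biUnion]
  · apply le_of_eq
    apply Finset.sum_congr rfl
    intro i _
    rw [Finset.card_powersetCard, Finset.card_univ, Fintype.card_fin]
  · intro i hi j hj hij
    apply Finset.disjoint_left.2
    intro s hs1 hs2
    rw [Finset.mem_powersetCard] at hs1 hs2
    exact hij (hs1.2.symm.trans hs2.2)

lemma mom_update_true {n : ℕ} (y : Fin n → Bool) (j : Fin n) (h : y j = false) :
    mom (Function.update y j true) = mom y + ((j : ℕ) + 1) := by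
  have := mom_update y j true
  rw [h] at this
  simp only [Bool.false_eq_true, if_false, if_true, mul_zero, mul_one, add_zero] at this
  omega

lemma mom_update_false {n : ℕ} (y : Fin n → Bool) (j : Fin n) (h : y j = true) :
    mom y = mom (Function.update y j false) + ((j : ℕ) + 1) := by
  have := mom_update y j false
  rw [h] at this
  simp only [Bool.false_eq_true, if_false, if_true, mul_zero, mul_one, add_zero] at this
  omega

lemma ham_update_le' {n : ℕ} (y : Fin n → Bool) (j : Fin n) (b : Bool) :
    hammingDist y (Function.update y j b) ≤ 1 := by
  rw [hammingDist_comm]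
  exact ham_update_le y j b


/-- For every `n ≥ 1`, `d_min ≥ 1` there is a residue `a` mod `n+1` and a
code `C*` of length `n` with all moments `≡ a (mod n+1)`, minimum Hamming distance at
least `d_min`, and `|C*| · V₂(n, d_min+1) ≥ 2^(n−1)` where `V₂(n,r) = ∑_{i=0}^{r} C(n,i)`;
moreover distinct codewords have no common subsequence of length `n − 1`, so `C*` also
corrects a single deletion. -/
theorem stmt10 {n dmin : ℕ} (hn : 1 ≤ n) (hd : 1 ≤ dmin) :
    ∃ (a : ℕ) (C : Finset (Fin n → Bool)),
      (∀ x ∈ C, mom x % (n + 1) = a) ∧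
      (∀ x ∈ C, ∀ y ∈ C, x ≠ y → dmin ≤ hammingDist x y) ∧
      2 ^ (n - 1) ≤ C.card * (∑ i ∈ Finset.range (dmin + 2), n.choose i) ∧
      (∀ x ∈ C, ∀ y ∈ C, x ≠ y →
        ¬ ∃ w : List Bool, w.length = n - 1 ∧
          w.Sublist (List.ofFn x) ∧ w.Sublist (List.ofFn y)) := by
  classical
  set Q : (Fin n → Bool) → ℕ → Prop :=
    fun y a => ∃ z, mom z % (n + 1) = a ∧ hammingDist y z ≤ 1 with hQ
  set near : ℕ → Finset (Fin n → Bool) :=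
    fun a => Finset.univ.filter (fun y => Q y a) with hnear
  -- reachability
  have reach : ∀ (y : Fin n → Bool) (r : ℕ), 1 ≤ r → r ≤ n →
      Q y ((mom y + r) % (n + 1)) ∨ Q y ((mom y + (n + 1 - r)) % (n + 1)) := by
    intro y r hr1 hrn
    have hj : r - 1 < n := by omega
    set j : Fin n := ⟨r - 1, hj⟩ with hjdef
    have hjr : (j : ℕ) + 1 = r := by simp [hjdef]; omega
    cases hyj : y j with
    | false =>
      left
      refine ⟨Function.update y j true, ?_, ham_update_le' y j true⟩
      have h := mom_update_true y j hyj
      rw [h, hjr]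
    | true =>
      right
      refine ⟨Function.update y j false, ?_, ham_update_le' y j false⟩
      have h := mom_update_false y j hyj
      rw [hjr] at h
      have : mom y + (n + 1 - r) = mom (Function.update y j false) + (n + 1) := by
        omega
      rw [this, Nat.add_mod_right]
  -- per-y count
  have percount : ∀ y : Fin n → Bool,
      n + 1 ≤ 2 * ((Finset.range (n + 1)).filter (Q y)).card := by
    intro y
    set R : Finset ℕ :=
      (Finset.range (n + 1)).filter (fun r => Q y ((mom y + r) % (n + 1))) with hR
    have hzero : 0 ∈ R := by
      rw [hR]
      refine Finset.mem_filter.2 ⟨Finset.mem_range.2 (by omega), ?_⟩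
      exact ⟨y, by rw [add_zero], by rw [hammingDist_self]; omega⟩
    have hcover : Finset.range (n + 1) ⊆ R ∪ R.image (fun s => (n + 1 - s) % (n + 1)) := by
      intro r hrmem
      have hrlt : r < n + 1 := Finset.mem_range.1 hrmem
      rcases Nat.eq_zero_or_pos r with rfl | hrpos
      · exact Finset.mem_union_left _ hzero
      rcases reach y r hrpos (by omega) with h | h
      · exact Finset.mem_union_left _
          (Finset.mem_filter.2 ⟨hrmem, h⟩)
      · apply Finset.mem_union_right
        apply Finset.mem_image.2
        refine ⟨n + 1 - r, ?_, ?_⟩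
        · exact Finset.mem_filter.2 ⟨Finset.mem_range.2 (by omega), h⟩
        · have h1 : n + 1 - (n + 1 - r) = r := by omega
          rw [h1, Nat.mod_eq_of_lt hrlt]
    have hRA : R.card ≤ ((Finset.range (n + 1)).filter (Q y)).card := by
      apply Finset.card_le_card_of_injOn (fun r => (mom y + r) % (n + 1))
      · intro r hrm
        rw [hR] at hrm
        have := Finset.mem_filter.1 hrm
        exact Finset.mem_filter.2
          ⟨Finset.mem_range.2 (Nat.mod_lt _ (by omega)), this.2⟩
      · intro r1 h1 r2 h2 heq
        simp only [hR, Finset.coe_filter, Set.mem_setOf_eq, Finset.mem_range] at h1 h2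
        have hm : Nat.ModEq (n + 1) (mom y + r1) (mom y + r2) := heq
        have := Nat.ModEq.add_left_cancel' (mom y) hm
        unfold Nat.ModEq at this
        rwa [Nat.mod_eq_of_lt h1.1, Nat.mod_eq_of_lt h2.1] at this
    calc n + 1 = (Finset.range (n + 1)).card := (Finset.card_range _).symm
      _ ≤ (R ∪ R.image (fun s => (n + 1 - s) % (n + 1))).card := Finset.card_le_card hcover
      _ ≤ R.card + (R.image (fun s => (n + 1 - s) % (n + 1))).card := Finset.card_union_le _ _
      _ ≤ R.card + R.card := by
            have h5 := Finset.card_image_le (s := R) (f := fun s => (n + 1 - s) % (n + 1))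
            omega
      _ ≤ 2 * ((Finset.range (n + 1)).filter (Q y)).card := by omega
  -- double counting
  have hsum : ∑ a ∈ Finset.range (n + 1), (near a).card
      = ∑ y : Fin n → Bool, ((Finset.range (n + 1)).filter (Q y)).card := by
    have h1 : ∀ a, (near a).card = ∑ y : Fin n → Bool, if Q y a then 1 else 0 := by
      intro a
      rw [hnear]
      exact Finset.card_filter _ _
    have h2 : ∀ y : Fin n → Bool, ((Finset.range (n + 1)).filter (Q y)).card
        = ∑ a ∈ Finset.range (n + 1), if Q y a then 1 else 0 := by
      intro y
      exact Finset.card_filter _ _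
    simp only [h1, h2]
    exact Finset.sum_comm
  have hcardΩ : Fintype.card (Fin n → Bool) = 2 ^ n := by
    simp [Fintype.card_fun]
  have htot : (n + 1) * 2 ^ (n - 1) ≤ ∑ a ∈ Finset.range (n + 1), (near a).card := by
    have h3 : (n + 1) * 2 ^ n ≤ 2 * ∑ a ∈ Finset.range (n + 1), (near a).card := by
      rw [hsum, Finset.mul_sum]
      calc (n + 1) * 2 ^ n = ∑ _y : Fin n → Bool, (n + 1) := by
            rw [Finset.sum_const, Finset.card_univ, hcardΩ, smul_eq_mul, mul_comm]
        _ ≤ _ := Finset.sum_le_sum (fun y _ => percount y)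
    have h4 : 2 ^ n = 2 * 2 ^ (n - 1) := by
      rw [← pow_succ']
      congr 1
      omega
    rw [h4] at h3
    have h5 : 2 * ((n + 1) * 2 ^ (n - 1)) ≤ 2 * ∑ a ∈ Finset.range (n + 1), (near a).card := by
      calc 2 * ((n + 1) * 2 ^ (n - 1)) = (n + 1) * (2 * 2 ^ (n - 1)) := by ring
        _ ≤ _ := h3
    omega
  have hex : ∃ a ∈ Finset.range (n + 1), 2 ^ (n - 1) ≤ (near a).card := by
    apply Finset.exists_le_of_sum_le (Finset.nonempty_range_iff.2 (by omega))
    rw [Finset.sum_const, Finset.card_range, smul_eq_mul]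
    exact htot
  obtain ⟨a, _, hacard⟩ := hex
  -- maximal code
  set Va : Finset (Fin n → Bool) :=
    Finset.univ.filter (fun z => mom z % (n + 1) = a) with hVa
  set Sfam : Finset (Finset (Fin n → Bool)) :=
    Va.powerset.filter
      (fun s => ∀ x ∈ s, ∀ y ∈ s, x ≠ y → dmin ≤ hammingDist x y) with hSfam
  have hSne : Sfam.Nonempty := by
    refine ⟨∅, Finset.mem_filter.2 ⟨Finset.empty_mem_powerset _, ?_⟩⟩
    intro x hx
    simp at hx
  obtain ⟨C, hCmem, hCmax⟩ := Finset.exists_max_image Sfam Finset.card hSne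
  have hCsub : C ⊆ Va := Finset.mem_powerset.1 (Finset.mem_filter.1 hCmem).1
  have hCsep : ∀ x ∈ C, ∀ y ∈ C, x ≠ y → dmin ≤ hammingDist x y :=
    (Finset.mem_filter.1 hCmem).2
  have hcov : ∀ x ∈ Va, ∃ c ∈ C, hammingDist x c ≤ dmin - 1 := by
    intro x hx
    by_contra hcon
    push_neg at hcon
    have hxC : x ∉ C := by
      intro hxC
      have := hcon x hxC
      rw [hammingDist_self] at this
      omega
    have hC' : insert x C ∈ Sfam := by
      refine Finset.mem_filter.2 ⟨Finset.mem_powerset.2 (Finset.insert_subset hx hCsub), ?_⟩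
      intro u hu v hv huv
      rcases Finset.mem_insert.1 hu with h1 | h1
      · rcases Finset.mem_insert.1 hv with h2 | h2
        · exact absurd (h1.trans h2.symm) huv
        · subst h1
          have := hcon v h2
          omega
      · rcases Finset.mem_insert.1 hv with h2 | h2
        · subst h2
          have := hcon u h1
          rw [hammingDist_comm]
          omega
        · exact hCsep u h1 v h2 huv
    have := hCmax _ hC'
    rw [Finset.card_insert_of_notMem hxC] at this
    omega
  -- counting chain
  have hchain : 2 ^ (n - 1) ≤ C.card * (∑ i ∈ Finset.range (dmin + 2), n.choose i) := by
    have hsubset : near a ⊆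
        C.biUnion (fun c => Finset.univ.filter (fun z => hammingDist z c ≤ dmin + 1)) := by
      intro y hy
      rw [hnear] at hy
      obtain ⟨z, hz1, hz2⟩ := (Finset.mem_filter.1 hy).2
      have hzVa : z ∈ Va := Finset.mem_filter.2 ⟨Finset.mem_univ _, hz1⟩
      obtain ⟨c, hc, hdc⟩ := hcov z hzVa
      apply Finset.mem_biUnion.2
      refine ⟨c, hc, Finset.mem_filter.2 ⟨Finset.mem_univ _, ?_⟩⟩
      calc hammingDist y c ≤ hammingDist y z + hammingDist z c := hammingDist_triangle _ _ _
        _ ≤ dmin + 1 := by omega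
    calc 2 ^ (n - 1) ≤ (near a).card := hacard
      _ ≤ (C.biUnion (fun c => Finset.univ.filter
            (fun z => hammingDist z c ≤ dmin + 1))).card := Finset.card_le_card hsubset
      _ ≤ ∑ c ∈ C, (Finset.univ.filter
            (fun z => hammingDist z c ≤ dmin + 1)).card := Finset.card_biUnion_le
      _ ≤ ∑ _c ∈ C, (∑ i ∈ Finset.range (dmin + 2), n.choose i) :=
            Finset.sum_le_sum (fun c _ => ball_card_le n (dmin + 1) c)
      _ = C.card * (∑ i ∈ Finset.range (dmin + 2), n.choose i) := by
            rw [Finset.sum_const, smul_eq_mul]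
  refine ⟨a, C, ?_, hCsep, hchain, ?_⟩
  · intro x hx
    exact (Finset.mem_filter.1 (hCsub hx)).2
  · intro x hx y hy hxy ⟨w, hw, h1, h2⟩
    have hax : mom x % (n + 1) = a := (Finset.mem_filter.1 (hCsub hx)).2
    have hay : mom y % (n + 1) = a := (Finset.mem_filter.1 (hCsub hy)).2
    exact hxy (vt_fin hn (hax.trans hay.symm) w hw h1 h2)
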